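/- Let K be a polytope satisfying the height and hourglass conditions, so that ‖v − v̄_{∂K}‖_{L²(K)} ≲ h_K‖∇v‖_{L²(conv(K))} and |K| ≂ h_K^d hold. Let Π_K u ∈ P₁ be the elliptic projection with ∇Π_K u = average of ∇u over K, normalized by ∫_{∂K}Π_K u = ∫_{∂K} u. Then for u ∈ H²(conv(K)): h_K^{-1}‖u − Π_K u‖_{L²(K)} + ‖∇(u − Π_K u)‖_{L²(K)} ≲ h_K |u|_{H²(conv(K))}. -/

import Mathlib

open MeasureTheory ENNReal Metric Bornology Set

noncomputable section

lemma my_smul {d : ℕ} (G : EuclideanSpace ℝ (Fin d) → ℝ≥0∞) (hG : Measurable G)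
    (c : EuclideanSpace ℝ (Fin d)) {a : ℝ} (ha : a ≠ 0) :
    ∫⁻ x, G (c + a • x) = ENNReal.ofReal |(a ^ d)⁻¹| * ∫⁻ x, G x := by
  have hG' : Measurable fun z => G (c + z) := hG.comp (measurable_const_add c)
  have h2 : ∫⁻ x, G (c + a • x) =
      ∫⁻ z, (fun z => G (c + z)) z ∂(Measure.map (a • ·) volume) :=
    (lintegral_map hG' (measurable_const_smul a)).symm
  rw [h2, Measure.map_addHaar_smul volume ha, lintegral_smul_measure,
    lintegral_add_left_eq_self (fun z => G z) c, finrank_euclideanSpace_fin]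
  exact smul_eq_mul _ _


lemma my_CS {α : Type*} [MeasurableSpace α] (μ : Measure α) {F : α → ℝ≥0∞}
    (hF : AEMeasurable F μ) :
    (∫⁻ a, F a ∂μ) ^ 2 ≤ μ Set.univ * ∫⁻ a, F a ^ 2 ∂μ := by
  have hconj : (2:ℝ).HolderConjugate 2 := Real.HolderConjugate.two_two
  have h := ENNReal.lintegral_mul_le_Lp_mul_Lq μ hconj hF
    (aemeasurable_const : AEMeasurable (fun _ : α => (1:ℝ≥0∞)) μ)
  simp only [Pi.mul_apply, mul_one, ENNReal.one_rpow, lintegral_one] at h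
  have h2 := pow_le_pow_left' h 2
  refine h2.trans (le_of_eq ?_)
  rw [mul_pow, ← ENNReal.rpow_natCast ((∫⁻ a, F a ^ (2:ℝ) ∂μ) ^ (1/(2:ℝ))) 2,
    ← ENNReal.rpow_natCast ((μ Set.univ) ^ (1/(2:ℝ))) 2,
    ← ENNReal.rpow_mul, ← ENNReal.rpow_mul]
  have : ∀ a, F a ^ (2:ℝ) = F a ^ (2:ℕ) := fun a => by
    rw [← ENNReal.rpow_natCast (F a) 2]; norm_num
  simp only [this]
  norm_num
  rw [mul_comm]


lemma my_integrableOn {α V : Type*} [MeasurableSpace α] [TopologicalSpace α]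
    [OpensMeasurableSpace α] [SecondCountableTopology α] 
    [NormedAddCommGroup V] {μ : Measure α} {s : Set α} {f : α → V}
    (hf : Continuous f) (hs : NullMeasurableSet s μ) (hfin : μ s ≠ ⊤)
    {M : ℝ} (hM : ∀ x ∈ s, ‖f x‖ ≤ M) : IntegrableOn f s μ := by
  haveI : IsFiniteMeasure (μ.restrict s) :=
    ⟨by rwa [Measure.restrict_apply_univ, lt_top_iff_ne_top]⟩
  refine ⟨hf.aestronglyMeasurable, HasFiniteIntegral.of_bounded (C := M) ?_⟩
  filter_upwards [ae_restrict_mem₀ hs] with x hx using hM x hx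


variable {d : ℕ}
local notation "E" => EuclideanSpace ℝ (Fin d)

set_option maxHeartbeats 1000000 in
lemma my_core (c₁ : ℝ) (hc₁ : 0 < c₁) (K : Set E)
    (hK : MeasurableSet K) (hKb : Bornology.IsBounded K) (hK0 : 0 < volume K)
    (hd : 0 < Metric.diam K)
    (hvol : c₁ * (Metric.diam K) ^ d ≤ (volume K).toReal)
    (f : E → E) (hf : ContDiff ℝ 1 f)
    (hgint : IntegrableOn (fun x => ‖fderiv ℝ f x‖ ^ 2) (convexHull ℝ K))
    (T : Set E) (hT : T ⊆ convexHull ℝ K) :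
    ∫ x in T, ‖f x - ⨍ y in K, f y‖ ^ 2 ≤
      (2 ^ d * (volume (Metric.closedBall (0 : E) 1)).toReal / c₁) *
        (Metric.diam K) ^ 2 * ∫ x in convexHull ℝ K, ‖fderiv ℝ f x‖ ^ 2 := by
  set S := convexHull ℝ K with hS
  set Sc := closure S with hSc
  set h := Metric.diam K with hh
  set g : E → ℝ := fun x => ‖fderiv ℝ f x‖ with hg
  set gp : E := ⨍ y in K, f y with hgp
  set ω : ℝ≥0∞ := volume (Metric.closedBall (0 : E) 1) with hω
  have hconv : Convex ℝ S := convex_convexHull ℝ K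
  have hKS : K ⊆ S := subset_convexHull ℝ K
  have hSb : Bornology.IsBounded S := isBounded_convexHull.mpr hKb
  have hSccomp : IsCompact Sc := hSb.isCompact_closure
  have hdiamS : Metric.diam S = h := convexHull_diam K
  have hKne : K.Nonempty := nonempty_of_measure_ne_zero hK0.ne'
  obtain ⟨x₀, hx₀⟩ := hKne
  have hfc : Continuous f := hf.continuous
  have hgc : Continuous g := (hf.continuous_fderiv one_ne_zero).norm
  have hKfin : volume K ≠ ⊤ := hKb.measure_lt_top.ne
  have hScfin : volume Sc ≠ ⊤ := hSb.closure.measure_lt_top.ne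
  have hμKr : 0 < (volume K).toReal := ENNReal.toReal_pos hK0.ne' hKfin
  -- ball bound
  have hScball : volume Sc ≤ ENNReal.ofReal (h ^ d) * ω := by
    have hsub : Sc ⊆ Metric.closedBall x₀ h := by
      intro z hz
      have : dist z x₀ ≤ Metric.diam Sc :=
        Metric.dist_le_diam_of_mem hSb.closure hz (subset_closure (hKS hx₀))
      simpa [Metric.mem_closedBall] using this.trans (by rw [Metric.diam_closure, hdiamS])
    calc volume Sc ≤ volume (Metric.closedBall x₀ h) := measure_mono hsub
      _ = ENNReal.ofReal (h ^ d) * ω := by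
          rw [Measure.addHaar_closedBall' volume x₀ hd.le, finrank_euclideanSpace_fin]
  -- G
  set G : E → ℝ≥0∞ := Sc.indicator (fun z => ENNReal.ofReal (g z ^ 2)) with hG
  have hGmeas : Measurable G :=
    (ENNReal.measurable_ofReal.comp ((hgc.pow 2).measurable)).indicator
      isClosed_closure.measurableSet
  set IG : ℝ≥0∞ := ∫⁻ z, G z with hIG
  have hIGeq : IG = ENNReal.ofReal (∫ x in S, g x ^ 2) := by
    have hae : S =ᵐ[volume] Sc := by
      refine (MeasureTheory.ae_eq_set.2 ⟨?_, ?_⟩)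
      · exact measure_mono_null (Set.diff_eq_empty.2 subset_closure).le measure_empty
      · refine measure_mono_null ?_ (hconv.addHaar_frontier volume)
        intro z hz
        exact ⟨hz.1, fun hi => hz.2 (interior_subset hi)⟩
    rw [hIG, hG, lintegral_indicator isClosed_closure.measurableSet _,
      ← Measure.restrict_congr_set hae,
      ← ofReal_integral_eq_lintegral_ofReal hgint
        (Filter.Eventually.of_forall fun x => sq_nonneg _)]
  -- pointwise P1+P2
  obtain ⟨Mf, hMf⟩ := hSccomp.exists_bound_of_continuousOn hfc.continuousOn
  have hKSc : K ⊆ Sc := hKS.trans subset_closure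
  have hfiK : IntegrableOn f K := my_integrableOn hfc hK.nullMeasurableSet hKfin
    (fun x hx => hMf x (hKSc hx))
  have hP12 : ∀ x : E, ((‖f x - gp‖₊ : ℝ≥0∞)) ^ 2 ≤
      (volume K)⁻¹ * ∫⁻ y in K, ((‖f x - f y‖₊ : ℝ≥0∞)) ^ 2 := by
    intro x
    have hconstK : IntegrableOn (fun _ : E => f x) K :=
      integrableOn_const hKfin
    have hsubint : IntegrableOn (fun y => f x - f y) K := hconstK.sub hfiK
    have hreal : ‖f x - gp‖ ≤ ((volume K).toReal)⁻¹ * ∫ y in K, ‖f x - f y‖ := by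
      have h1 : f x - gp = ((volume K).toReal)⁻¹ • ∫ y in K, (f x - f y) := by
        rw [integral_sub hconstK hfiK, setIntegral_const, measureReal_def, smul_sub,
          inv_smul_smul₀ hμKr.ne', hgp, setAverage_eq, measureReal_def]
      calc ‖f x - gp‖ = ((volume K).toReal)⁻¹ * ‖∫ y in K, (f x - f y)‖ := by
            rw [h1, norm_smul, Real.norm_eq_abs, abs_of_nonneg (inv_nonneg.2 hμKr.le)]
        _ ≤ ((volume K).toReal)⁻¹ * ∫ y in K, ‖f x - f y‖ :=
            mul_le_mul_of_nonneg_left (norm_integral_le_integral_norm _)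
              (inv_nonneg.2 hμKr.le)
    have he1 : (‖f x - gp‖₊ : ℝ≥0∞) ≤ (volume K)⁻¹ * ∫⁻ y in K, (‖f x - f y‖₊ : ℝ≥0∞) := by
      rw [← enorm_eq_nnnorm, ← ofReal_norm]
      calc ENNReal.ofReal ‖f x - gp‖
          ≤ ENNReal.ofReal (((volume K).toReal)⁻¹ * ∫ y in K, ‖f x - f y‖) :=
            ENNReal.ofReal_le_ofReal hreal
        _ = ENNReal.ofReal ((volume K).toReal)⁻¹ *
              ENNReal.ofReal (∫ y in K, ‖f x - f y‖) := by
            rw [ENNReal.ofReal_mul (inv_nonneg.2 hμKr.le)]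
        _ = (volume K)⁻¹ * ∫⁻ y in K, (‖f x - f y‖₊ : ℝ≥0∞) := by
            rw [ENNReal.ofReal_inv_of_pos hμKr, ENNReal.ofReal_toReal hKfin]
            exact congrArg _ (ofReal_integral_norm_eq_lintegral_enorm hsubint)
    have hmeasn : AEMeasurable (fun y : E => (‖f x - f y‖₊ : ℝ≥0∞)) (volume.restrict K) :=
      ((continuous_const.sub hfc).nnnorm.measurable.coe_nnreal_ennreal).aemeasurable
    calc (‖f x - gp‖₊ : ℝ≥0∞) ^ 2
        ≤ ((volume K)⁻¹ * ∫⁻ y in K, (‖f x - f y‖₊ : ℝ≥0∞)) ^ 2 := pow_le_pow_left' he1 2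
      _ = ((volume K)⁻¹) ^ 2 * (∫⁻ y in K, (‖f x - f y‖₊ : ℝ≥0∞)) ^ 2 := mul_pow _ _ 2
      _ ≤ ((volume K)⁻¹) ^ 2 * ((volume.restrict K) Set.univ *
            ∫⁻ y in K, ((‖f x - f y‖₊ : ℝ≥0∞)) ^ 2) := by
          gcongr
          exact my_CS _ hmeasn
      _ = (volume K)⁻¹ * ∫⁻ y in K, ((‖f x - f y‖₊ : ℝ≥0∞)) ^ 2 := by
          rw [Measure.restrict_apply_univ, pow_two, mul_assoc, ← mul_assoc (volume K)⁻¹ (volume K),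
            ENNReal.inv_mul_cancel hK0.ne' hKfin, one_mul]
  -- P3
  have hP3 : ∀ x ∈ S, ∀ y ∈ K, ((‖f x - f y‖₊ : ℝ≥0∞)) ^ 2 ≤
      (ENNReal.ofReal h) ^ 2 * ∫⁻ t in Set.Ioc (0:ℝ) 1, G (y + t • (x - y)) := by
    intro x hx y hy
    set ψ : ℝ → E := fun t => y + t • (x - y) with hψ
    have hψc : Continuous ψ := continuous_const.add (continuous_id.smul continuous_const)
    have hψS : ∀ t ∈ Set.Icc (0:ℝ) 1, ψ t ∈ S := by
      intro t ht
      have hmem := hconv (hKS hy) hx (by linarith [ht.2] : (0:ℝ) ≤ 1 - t) ht.1 (by ring)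
      convert hmem using 1
      simp only [hψ]
      module
    have hφ' : ∀ t : ℝ, HasDerivAt ψ (x - y) t := fun t => by
      simpa [hψ] using ((hasDerivAt_id t).smul_const (x - y)).const_add y
    have hder : ∀ t ∈ Set.uIcc (0:ℝ) 1,
        HasDerivAt (fun t => f (ψ t)) ((fderiv ℝ f (ψ t)) (x - y)) t := fun t _ =>
      ((hf.differentiable one_ne_zero (ψ t)).hasFDerivAt).comp_hasDerivAt t (hφ' t)
    have hcont' : Continuous fun t => (fderiv ℝ f (ψ t)) (x - y) :=
      ((hf.continuous_fderiv one_ne_zero).comp hψc).clm_apply continuous_const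
    have heq : f x - f y = ∫ t in (0:ℝ)..1, (fderiv ℝ f (ψ t)) (x - y) := by
      rw [intervalIntegral.integral_eq_sub_of_hasDerivAt hder
        (hcont'.intervalIntegrable 0 1)]
      simp [hψ]
    have hnorm : ‖f x - f y‖ ≤ ∫ t in (0:ℝ)..1, g (ψ t) * h := by
      rw [heq]
      refine (intervalIntegral.norm_integral_le_integral_norm zero_le_one).trans ?_
      refine intervalIntegral.integral_mono_on zero_le_one
        ((hcont'.norm).intervalIntegrable 0 1)
        (((hgc.comp hψc).mul continuous_const).intervalIntegrable 0 1) ?_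
      intro t ht
      calc ‖(fderiv ℝ f (ψ t)) (x - y)‖ ≤ ‖fderiv ℝ f (ψ t)‖ * ‖x - y‖ :=
            ContinuousLinearMap.le_opNorm _ _
        _ ≤ g (ψ t) * h := by
            refine mul_le_mul_of_nonneg_left ?_ (norm_nonneg _)
            have hdd : dist x y ≤ Metric.diam S := Metric.dist_le_diam_of_mem hSb hx (hKS hy)
            rw [hdiamS] at hdd
            rwa [← dist_eq_norm]
    have hFint : IntegrableOn (fun t => g (ψ t) * h) (Set.Ioc (0:ℝ) 1) :=
      ((hgc.comp hψc).mul continuous_const).integrableOn_Ioc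
    have hA : (‖f x - f y‖₊ : ℝ≥0∞) ≤ ∫⁻ t in Set.Ioc (0:ℝ) 1, ENNReal.ofReal (g (ψ t) * h) := by
      rw [← enorm_eq_nnnorm, ← ofReal_norm,
        ← ofReal_integral_eq_lintegral_ofReal hFint
          (Filter.Eventually.of_forall fun t => mul_nonneg (norm_nonneg _) hd.le)]
      exact ENNReal.ofReal_le_ofReal
        (hnorm.trans (le_of_eq (intervalIntegral.integral_of_le zero_le_one)))
    have hmeasF : AEMeasurable (fun t : ℝ => ENNReal.ofReal (g (ψ t) * h))
        (volume.restrict (Set.Ioc (0:ℝ) 1)) :=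
      (ENNReal.measurable_ofReal.comp ((hgc.comp hψc).mul continuous_const).measurable).aemeasurable
    calc ((‖f x - f y‖₊ : ℝ≥0∞)) ^ 2
        ≤ (∫⁻ t in Set.Ioc (0:ℝ) 1, ENNReal.ofReal (g (ψ t) * h)) ^ 2 := pow_le_pow_left' hA 2
      _ ≤ (volume.restrict (Set.Ioc (0:ℝ) 1)) Set.univ *
            ∫⁻ t in Set.Ioc (0:ℝ) 1, (ENNReal.ofReal (g (ψ t) * h)) ^ 2 := my_CS _ hmeasF
      _ = ∫⁻ t in Set.Ioc (0:ℝ) 1, (ENNReal.ofReal (g (ψ t) * h)) ^ 2 := by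
          rw [Measure.restrict_apply_univ, Real.volume_Ioc]
          norm_num
      _ = ∫⁻ t in Set.Ioc (0:ℝ) 1, (ENNReal.ofReal h) ^ 2 * G (ψ t) := by
          refine setLIntegral_congr_fun measurableSet_Ioc
            (fun t ht => ?_)
          have hmem : ψ t ∈ Sc := subset_closure (hψS t (Set.Ioc_subset_Icc_self ht))
          rw [hG]
          simp only [Set.indicator_of_mem hmem]
          rw [ENNReal.ofReal_mul (norm_nonneg _), mul_pow, ← ENNReal.ofReal_pow (norm_nonneg _)]
          ring
      _ = (ENNReal.ofReal h) ^ 2 * ∫⁻ t in Set.Ioc (0:ℝ) 1, G (ψ t) :=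
          lintegral_const_mul' _ _ (ENNReal.pow_ne_top ENNReal.ofReal_ne_top)
  -- triple integral bound
  have hμI : volume (Set.Ioc (0:ℝ) 1) = 1 := by rw [Real.volume_Ioc]; norm_num
  have htwo : ∀ a : ℝ, 1/2 ≤ a → a ≠ 0 → ENNReal.ofReal |(a ^ d)⁻¹| ≤ ENNReal.ofReal (2 ^ d) := by
    intro a ha ha0
    refine ENNReal.ofReal_le_ofReal ?_
    have hap : (0:ℝ) < a := by linarith
    rw [abs_of_nonneg (inv_nonneg.2 (pow_nonneg hap.le d))]
    have h2 : (2:ℝ)⁻¹ ^ d ≤ a ^ d := pow_le_pow_left₀ (by norm_num) (by linarith) d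
    calc (a ^ d)⁻¹ ≤ ((2:ℝ)⁻¹ ^ d)⁻¹ := by
          apply inv_anti₀ (pow_pos (by norm_num) d) h2
      _ = 2 ^ d := by rw [inv_pow, inv_inv]
  have hSSc : volume S ≤ volume Sc := measure_mono subset_closure
  have hKSc' : volume K ≤ volume Sc := measure_mono hKSc
  have hinner : ∀ t ∈ Set.Ioc (0:ℝ) 1,
      (∫⁻ x in S, ∫⁻ y in K, G (y + t • (x - y))) ≤
        ENNReal.ofReal (2 ^ d) * (volume Sc * IG) := by
    intro t ht
    rcases le_or_gt t (1/2) with hc | hc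
    · have h1t : (0:ℝ) < 1 - t := by linarith
      have hb : ∀ x : E, (∫⁻ y in K, G (y + t • (x - y))) ≤ ENNReal.ofReal (2 ^ d) * IG := by
        intro x
        have hrw : ∀ y : E, y + t • (x - y) = t • x + (1 - t) • y := fun y => by module
        calc (∫⁻ y in K, G (y + t • (x - y))) = ∫⁻ y in K, G (t • x + (1 - t) • y) := by
              simp_rw [hrw]
          _ ≤ ∫⁻ y, G (t • x + (1 - t) • y) := lintegral_mono' Measure.restrict_le_self le_rfl
          _ = ENNReal.ofReal |((1 - t) ^ d)⁻¹| * IG := my_smul G hGmeas _ h1t.ne'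
          _ ≤ ENNReal.ofReal (2 ^ d) * IG :=
              mul_le_mul_left (htwo _ (by linarith) h1t.ne') IG
      calc (∫⁻ x in S, ∫⁻ y in K, G (y + t • (x - y)))
          ≤ ∫⁻ _x in S, ENNReal.ofReal (2 ^ d) * IG := lintegral_mono fun x => hb x
        _ = ENNReal.ofReal (2 ^ d) * IG * volume S := setLIntegral_const _ _
        _ ≤ ENNReal.ofReal (2 ^ d) * IG * volume Sc := by gcongr
        _ = ENNReal.ofReal (2 ^ d) * (volume Sc * IG) := by ring
    · have ht0 : (0:ℝ) < t := ht.1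
      have hmeas0 : Measurable (Function.uncurry fun x y : E => G (y + t • (x - y))) :=
        hGmeas.comp ((by fun_prop : Continuous fun a : E × E => a.2 + t • (a.1 - a.2)).measurable)
      have hswap : (∫⁻ x in S, ∫⁻ y in K, G (y + t • (x - y))) =
          ∫⁻ y in K, ∫⁻ x in S, G (y + t • (x - y)) :=
        lintegral_lintegral_swap hmeas0.aemeasurable
      have hb : ∀ y : E, (∫⁻ x in S, G (y + t • (x - y))) ≤ ENNReal.ofReal (2 ^ d) * IG := by
        intro y
        have hrw : ∀ x : E, y + t • (x - y) = (1 - t) • y + t • x := fun x => by module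
        calc (∫⁻ x in S, G (y + t • (x - y))) = ∫⁻ x in S, G ((1 - t) • y + t • x) := by
              simp_rw [hrw]
          _ ≤ ∫⁻ x, G ((1 - t) • y + t • x) := lintegral_mono' Measure.restrict_le_self le_rfl
          _ = ENNReal.ofReal |(t ^ d)⁻¹| * IG := my_smul G hGmeas _ ht0.ne'
          _ ≤ ENNReal.ofReal (2 ^ d) * IG :=
              mul_le_mul_left (htwo _ (by linarith) ht0.ne') IG
      calc (∫⁻ x in S, ∫⁻ y in K, G (y + t • (x - y)))
          = ∫⁻ y in K, ∫⁻ x in S, G (y + t • (x - y)) := hswap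
        _ ≤ ∫⁻ _y in K, ENNReal.ofReal (2 ^ d) * IG := lintegral_mono fun y => hb y
        _ = ENNReal.ofReal (2 ^ d) * IG * volume K := setLIntegral_const _ _
        _ ≤ ENNReal.ofReal (2 ^ d) * IG * volume Sc := by gcongr
        _ = ENNReal.ofReal (2 ^ d) * (volume Sc * IG) := by ring
  have hW : ∫⁻ x in S, ∫⁻ y in K, ∫⁻ t in Set.Ioc (0:ℝ) 1, G (y + t • (x - y)) ≤
      ENNReal.ofReal (2 ^ d) * (volume Sc * IG) := by
    have hswap1 : ∀ x : E, (∫⁻ y in K, ∫⁻ t in Set.Ioc (0:ℝ) 1, G (y + t • (x - y))) =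
        ∫⁻ t in Set.Ioc (0:ℝ) 1, ∫⁻ y in K, G (y + t • (x - y)) := by
      intro x
      have hmeas1 : Measurable (Function.uncurry fun (y : E) (t : ℝ) => G (y + t • (x - y))) :=
        hGmeas.comp ((continuous_fst.add (continuous_snd.smul
          (continuous_const.sub continuous_fst))).measurable)
      exact lintegral_lintegral_swap hmeas1.aemeasurable
    have hmeas2 : Measurable (Function.uncurry fun (x : E) (t : ℝ) =>
        ∫⁻ y in K, G (y + t • (x - y))) := by
      refine Measurable.lintegral_prod_right (f := fun (p : E × ℝ) (y : E) =>
        G (y + p.2 • (p.1 - y))) ?_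
      exact hGmeas.comp ((continuous_snd.add ((continuous_fst.snd).smul
        ((continuous_fst.fst).sub continuous_snd))).measurable)
    calc (∫⁻ x in S, ∫⁻ y in K, ∫⁻ t in Set.Ioc (0:ℝ) 1, G (y + t • (x - y)))
        = ∫⁻ x in S, ∫⁻ t in Set.Ioc (0:ℝ) 1, ∫⁻ y in K, G (y + t • (x - y)) :=
          lintegral_congr fun x => hswap1 x
      _ = ∫⁻ t in Set.Ioc (0:ℝ) 1, ∫⁻ x in S, ∫⁻ y in K, G (y + t • (x - y)) :=
          lintegral_lintegral_swap hmeas2.aemeasurable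
      _ ≤ ∫⁻ _t in Set.Ioc (0:ℝ) 1, ENNReal.ofReal (2 ^ d) * (volume Sc * IG) := by
          refine lintegral_mono_ae ?_
          filter_upwards [ae_restrict_mem measurableSet_Ioc] with t ht using hinner t ht
      _ = ENNReal.ofReal (2 ^ d) * (volume Sc * IG) := by
          rw [setLIntegral_const, hμI, mul_one]
  -- combine
  have hμKinv : ((volume K)⁻¹ : ℝ≥0∞) ≠ ⊤ := ENNReal.inv_ne_top.2 hK0.ne'
  have hH2 : ((ENNReal.ofReal h) ^ 2 : ℝ≥0∞) ≠ ⊤ := ENNReal.pow_ne_top ENNReal.ofReal_ne_top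
  have hmain : ∫⁻ x in T, ((‖f x - gp‖₊ : ℝ≥0∞)) ^ 2 ≤
      (volume K)⁻¹ * ((ENNReal.ofReal h) ^ 2 *
        (ENNReal.ofReal (2 ^ d) * (volume Sc * IG))) := by
    calc ∫⁻ x in T, ((‖f x - gp‖₊ : ℝ≥0∞)) ^ 2
        ≤ ∫⁻ x in S, ((‖f x - gp‖₊ : ℝ≥0∞)) ^ 2 :=
          lintegral_mono' (Measure.restrict_mono hT le_rfl) le_rfl
      _ ≤ ∫⁻ x in S, (volume K)⁻¹ * ∫⁻ y in K, ((‖f x - f y‖₊ : ℝ≥0∞)) ^ 2 :=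
          lintegral_mono hP12
      _ ≤ ∫⁻ x in S, (volume K)⁻¹ * ∫⁻ y in K,
            ((ENNReal.ofReal h) ^ 2 * ∫⁻ t in Set.Ioc (0:ℝ) 1, G (y + t • (x - y))) := by
          refine lintegral_mono_ae ?_
          filter_upwards [ae_restrict_mem₀ (hconv.nullMeasurableSet volume)] with x hx
          refine mul_le_mul_right ?_ _
          refine lintegral_mono_ae ?_
          filter_upwards [ae_restrict_mem hK] with y hy using hP3 x hx y hy
      _ = (volume K)⁻¹ * ((ENNReal.ofReal h) ^ 2 *
            ∫⁻ x in S, ∫⁻ y in K, ∫⁻ t in Set.Ioc (0:ℝ) 1, G (y + t • (x - y))) := by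
          simp_rw [lintegral_const_mul' ((ENNReal.ofReal h) ^ 2) _ hH2]
          rw [lintegral_const_mul' _ _ hμKinv, lintegral_const_mul' _ _ hH2]
      _ ≤ (volume K)⁻¹ * ((ENNReal.ofReal h) ^ 2 *
            (ENNReal.ofReal (2 ^ d) * (volume Sc * IG))) :=
          mul_le_mul_right (mul_le_mul_right hW _) _
  -- convert to real
  set J : ℝ := ∫ x in S, g x ^ 2 with hJ
  have hJ0 : 0 ≤ J := integral_nonneg fun x => sq_nonneg _
  have hωfin : ω ≠ ⊤ := (isBounded_closedBall.measure_lt_top).ne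
  set ωr : ℝ := ω.toReal with hωr
  have hωr0 : 0 ≤ ωr := ENNReal.toReal_nonneg
  have hC0 : 0 ≤ (2:ℝ) ^ d * ωr / c₁ * h ^ 2 * J :=
    mul_nonneg (mul_nonneg (div_nonneg (mul_nonneg (pow_nonneg (by norm_num) d) hωr0)
      hc₁.le) (sq_nonneg h)) hJ0
  have hbound : (volume K)⁻¹ * ((ENNReal.ofReal h) ^ 2 *
      (ENNReal.ofReal (2 ^ d) * (volume Sc * IG))) ≤
      ENNReal.ofReal ((2 ^ d * ωr / c₁) * h ^ 2 * J) := by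
    have h1 : (volume K)⁻¹ ≤ ENNReal.ofReal (c₁ * h ^ d)⁻¹ := by
      rw [ENNReal.ofReal_inv_of_pos (by positivity : (0:ℝ) < c₁ * h ^ d)]
      refine ENNReal.inv_le_inv.2 ?_
      calc ENNReal.ofReal (c₁ * h ^ d) ≤ ENNReal.ofReal ((volume K).toReal) :=
            ENNReal.ofReal_le_ofReal hvol
        _ = volume K := ENNReal.ofReal_toReal hKfin
    have h2 : volume Sc ≤ ENNReal.ofReal (h ^ d * ωr) := by
      rw [ENNReal.ofReal_mul (pow_nonneg hd.le d), hωr, ENNReal.ofReal_toReal hωfin]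
      exact hScball
    calc (volume K)⁻¹ * ((ENNReal.ofReal h) ^ 2 *
          (ENNReal.ofReal (2 ^ d) * (volume Sc * IG)))
        ≤ ENNReal.ofReal (c₁ * h ^ d)⁻¹ * (ENNReal.ofReal (h ^ 2) *
            (ENNReal.ofReal (2 ^ d) * (ENNReal.ofReal (h ^ d * ωr) * ENNReal.ofReal J))) := by
          rw [hIGeq, ← ENNReal.ofReal_pow hd.le]
          exact mul_le_mul' h1 (mul_le_mul_right
            (mul_le_mul_right (mul_le_mul_left h2 _) _) _)
      _ = ENNReal.ofReal ((c₁ * h ^ d)⁻¹ * (h ^ 2 * (2 ^ d * ((h ^ d * ωr) * J)))) := by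
          rw [← ENNReal.ofReal_mul (show (0:ℝ) ≤ h ^ d * ωr by positivity),
            ← ENNReal.ofReal_mul (show (0:ℝ) ≤ (2:ℝ) ^ d by positivity),
            ← ENNReal.ofReal_mul (show (0:ℝ) ≤ h ^ 2 by positivity),
            ← ENNReal.ofReal_mul (show (0:ℝ) ≤ (c₁ * h ^ d)⁻¹ by positivity)]
      _ = ENNReal.ofReal ((2 ^ d * ωr / c₁) * h ^ 2 * J) := by
          congr 1
          have hhd : h ^ d ≠ 0 := pow_ne_zero d hd.ne'
          field_simp
  have hint : ∫ x in T, ‖f x - gp‖ ^ 2 =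
      (∫⁻ x in T, ((‖f x - gp‖₊ : ℝ≥0∞)) ^ 2).toReal := by
    rw [integral_eq_lintegral_of_nonneg_ae (f := fun x => ‖f x - gp‖ ^ 2)
      (Filter.Eventually.of_forall fun x => sq_nonneg _)
      (((hfc.sub continuous_const).norm.pow 2 : Continuous fun x => ‖f x - gp‖ ^ 2).aestronglyMeasurable)]
    congr 1
    refine lintegral_congr fun x => ?_
    rw [ENNReal.ofReal_pow (norm_nonneg _), ofReal_norm, enorm_eq_nnnorm]
  rw [hint]
  calc (∫⁻ x in T, ((‖f x - gp‖₊ : ℝ≥0∞)) ^ 2).toReal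
      ≤ (ENNReal.ofReal ((2 ^ d * ωr / c₁) * h ^ 2 * J)).toReal :=
        ENNReal.toReal_mono ENNReal.ofReal_ne_top (hmain.trans hbound)
    _ = (2 ^ d * ωr / c₁) * h ^ 2 * J := ENNReal.toReal_ofReal hC0



set_option maxHeartbeats 1000000 in
/-- error estimate for the elliptic projection on an isotropic
element. Assume the boundary-average Poincaré inequality
`‖w - w̄_{∂K}‖_{L²(K)} ≤ Cp h_K ‖∇w‖_{L²(conv K)}` (height + hourglass conditions)
and the volume scaling `|K| ≥ c₁ h_K^d`. Let `Π_K u : x ↦ ⟪gp, x⟫ + cp` with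
`gp = ⨍_K ∇u` and normalization `∫_{∂K} Π_K u = ∫_{∂K} u`. Then for
`u ∈ H²(conv K)`:
`h_K⁻¹ ‖u - Π_K u‖_{L²(K)} + ‖∇(u - Π_K u)‖_{L²(K)} ≤ C h_K |u|_{H²(conv K)}`. -/
theorem stmt_12 (d : ℕ) (Cp c₁ : ℝ) (hCp : 0 < Cp) (hc₁ : 0 < c₁) :
    ∃ C > (0 : ℝ),
      ∀ (K : Set (EuclideanSpace ℝ (Fin d)))
        (u : EuclideanSpace ℝ (Fin d) → ℝ)
        (gp : EuclideanSpace ℝ (Fin d)) (cp : ℝ),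
        MeasurableSet K → Bornology.IsBounded K → 0 < volume K →
        0 < Metric.diam K →
        0 < μH[(d : ℝ) - 1] (frontier K) → μH[(d : ℝ) - 1] (frontier K) < ⊤ →
        -- boundary-average Poincaré inequality (height and hourglass conditions)
        (∀ w : EuclideanSpace ℝ (Fin d) → ℝ,
          (∀ x ∈ convexHull ℝ K, DifferentiableAt ℝ w x) →
          IntegrableOn (fun x => (w x) ^ 2) (convexHull ℝ K) →
          IntegrableOn (fun x => ‖gradient w x‖ ^ 2) (convexHull ℝ K) →
          IntegrableOn w (frontier K) μH[(d : ℝ) - 1] →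
          ∫ x in K, (w x - ⨍ y in frontier K, w y ∂μH[(d : ℝ) - 1]) ^ 2 ≤
            Cp ^ 2 * (Metric.diam K) ^ 2 *
              ∫ x in convexHull ℝ K, ‖gradient w x‖ ^ 2) →
        -- volume scaling |K| ≳ h_K^d
        c₁ * (Metric.diam K) ^ d ≤ (volume K).toReal →
        -- u ∈ H²(conv K)
        ContDiff ℝ 2 u →
        IntegrableOn (fun x => ‖fderiv ℝ (fun y => gradient u y) x‖ ^ 2)
          (convexHull ℝ K) →
        -- the elliptic projection: gradient part and boundary normalization
        gp = ⨍ x in K, gradient u x →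
        (∫ x in frontier K, ((inner ℝ gp x : ℝ) + cp) ∂μH[(d : ℝ) - 1] =
          ∫ x in frontier K, u x ∂μH[(d : ℝ) - 1]) →
        (Metric.diam K)⁻¹ *
            Real.sqrt (∫ x in K, (u x - ((inner ℝ gp x : ℝ) + cp)) ^ 2)
          + Real.sqrt (∫ x in K, ‖gradient u x - gp‖ ^ 2) ≤
          C * Metric.diam K *
            Real.sqrt (∫ x in convexHull ℝ K,
              ‖fderiv ℝ (fun y => gradient u y) x‖ ^ 2) := by
  classical
  set ω := volume (Metric.closedBall (0 : EuclideanSpace ℝ (Fin d)) 1) with hω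
  have hωfin : ω ≠ ⊤ := (isBounded_closedBall.measure_lt_top).ne
  have hωpos : 0 < ω := measure_closedBall_pos _ _ one_pos
  set C₀ : ℝ := 2 ^ d * ω.toReal / c₁ with hC₀
  have hC₀pos : 0 < C₀ :=
    div_pos (mul_pos (pow_pos two_pos d) (ENNReal.toReal_pos hωpos.ne' hωfin)) hc₁
  refine ⟨(Cp + 1) * Real.sqrt C₀,
    mul_pos (by linarith) (Real.sqrt_pos.2 hC₀pos), ?_⟩
  intro K u gp cp hK hKb hK0 hd hfr0 hfrfin hPoin hvol hu hHint hgp hnormal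
  set S := convexHull ℝ K with hS
  set h := Metric.diam K with hh
  set f : EuclideanSpace ℝ (Fin d) → EuclideanSpace ℝ (Fin d) :=
    fun x => gradient u x with hf
  have hfC1 : ContDiff ℝ 1 f :=
    ((InnerProductSpace.toDual ℝ (EuclideanSpace ℝ (Fin d))).symm.contDiff).comp
      (hu.fderiv_right (by norm_num))
  have hfc : Continuous f := hfC1.continuous
  have hgc : Continuous fun x => ‖fderiv ℝ f x‖ := (hfC1.continuous_fderiv one_ne_zero).norm
  -- core applications
  set J : ℝ := ∫ x in S, ‖fderiv ℝ f x‖ ^ 2 with hJ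
  have hJ0 : 0 ≤ J := integral_nonneg fun x => sq_nonneg _
  have hgpav : gp = ⨍ y in K, f y := hgp
  have hcoreS : ∫ x in S, ‖f x - gp‖ ^ 2 ≤ C₀ * h ^ 2 * J := by
    rw [hgpav]
    exact my_core c₁ hc₁ K hK hKb hK0 hd hvol f hfC1 hHint S subset_rfl
  have hcoreK : ∫ x in K, ‖f x - gp‖ ^ 2 ≤ C₀ * h ^ 2 * J := by
    rw [hgpav]
    exact my_core c₁ hc₁ K hK hKb hK0 hd hvol f hfC1 hHint K (subset_convexHull ℝ K)
  -- the error function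
  set e : EuclideanSpace ℝ (Fin d) → ℝ :=
    fun x => u x - ((inner ℝ gp x : ℝ) + cp) with he
  have hlincont : Continuous fun x : EuclideanSpace ℝ (Fin d) => (inner ℝ gp x : ℝ) + cp :=
    ((innerSL ℝ gp).continuous).add continuous_const
  have hec : Continuous e := (hu.continuous).sub hlincont
  have hgrad_e : ∀ x, gradient e x = f x - gp := by
    intro x
    have hu' : HasGradientAt u (gradient u x) x :=
      ((hu.differentiable (by norm_num)) x).hasGradientAt
    have htd : (InnerProductSpace.toDual ℝ (EuclideanSpace ℝ (Fin d))) gp = innerSL ℝ gp :=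
      ContinuousLinearMap.ext fun y => by
        simp [InnerProductSpace.toDual_apply_apply]
    have hlin : HasGradientAt (fun z : EuclideanSpace ℝ (Fin d) =>
        (inner ℝ gp z : ℝ) + cp) gp x := by
      rw [hasGradientAt_iff_hasFDerivAt, htd]
      exact ((innerSL ℝ gp).hasFDerivAt).add_const cp
    have hsub : HasGradientAt e (gradient u x - gp) x := by
      rw [hasGradientAt_iff_hasFDerivAt] at hu' hlin ⊢
      exact (hu'.sub hlin).congr_fderiv (map_sub _ _ _).symm
    exact hsub.gradient
  -- integrability side conditions
  have hSb : Bornology.IsBounded S := isBounded_convexHull.mpr hKb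
  have hSfin : volume S ≠ ⊤ := hSb.measure_lt_top.ne
  have hSnm : NullMeasurableSet S volume := (convex_convexHull ℝ K).nullMeasurableSet volume
  have hSccomp : IsCompact (closure S) := hSb.isCompact_closure
  have hfrcomp : IsCompact (frontier K) :=
    hKb.isCompact_closure.of_isClosed_subset isClosed_frontier frontier_subset_closure
  have hfrm : MeasurableSet (frontier K) := isClosed_frontier.measurableSet
  have hfrfin' : μH[(d : ℝ) - 1] (frontier K) ≠ ⊤ := hfrfin.ne
  -- integrable e^2 on S
  obtain ⟨M1, hM1⟩ := hSccomp.exists_bound_of_continuousOn ((hec.pow 2).continuousOn)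
  have hie2 : IntegrableOn (fun x => e x ^ 2) S :=
    my_integrableOn (hec.pow 2) hSnm hSfin fun x hx => hM1 x (subset_closure hx)
  -- integrable grad e^2 on S
  have hgradee : (fun x => ‖gradient e x‖ ^ 2) = fun x => ‖f x - gp‖ ^ 2 :=
    funext fun x => by rw [hgrad_e]
  obtain ⟨M2, hM2⟩ := hSccomp.exists_bound_of_continuousOn
    ((((hfc.sub continuous_const).norm.pow 2)).continuousOn)
  have hige : IntegrableOn (fun x => ‖gradient e x‖ ^ 2) S := by
    rw [hgradee]
    exact my_integrableOn ((hfc.sub continuous_const).norm.pow 2) hSnm hSfin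
      fun x hx => hM2 x (subset_closure hx)
  -- integrable e, u, lin on frontier
  obtain ⟨M3, hM3⟩ := hfrcomp.exists_bound_of_continuousOn (hec.continuousOn)
  have hief : IntegrableOn e (frontier K) μH[(d : ℝ) - 1] :=
    my_integrableOn hec hfrm.nullMeasurableSet hfrfin' fun x hx => hM3 x hx
  obtain ⟨M4, hM4⟩ := hfrcomp.exists_bound_of_continuousOn (hu.continuous.continuousOn)
  have hiuf : IntegrableOn u (frontier K) μH[(d : ℝ) - 1] :=
    my_integrableOn hu.continuous hfrm.nullMeasurableSet hfrfin' fun x hx => hM4 x hx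
  obtain ⟨M5, hM5⟩ := hfrcomp.exists_bound_of_continuousOn (hlincont.continuousOn)
  have hilf : IntegrableOn (fun x => (inner ℝ gp x : ℝ) + cp) (frontier K) μH[(d : ℝ) - 1] :=
    my_integrableOn hlincont hfrm.nullMeasurableSet hfrfin' fun x hx => hM5 x hx
  -- boundary average of e is zero
  have havg : (⨍ y in frontier K, e y ∂μH[(d : ℝ) - 1]) = 0 := by
    have hint0 : ∫ y in frontier K, e y ∂μH[(d : ℝ) - 1] = 0 := by
      rw [he]
      rw [integral_sub hiuf hilf, hnormal, sub_self]
    rw [setAverage_eq, hint0, smul_zero]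
  -- differentiability of e
  have hdiffe : ∀ x ∈ S, DifferentiableAt ℝ e x := by
    intro x _
    exact ((hu.differentiable (by norm_num)) x).sub
      (((innerSL ℝ gp).differentiableAt).add_const cp)
  -- apply Poincaré
  have hA : ∫ x in K, e x ^ 2 ≤ Cp ^ 2 * h ^ 2 * ∫ x in S, ‖f x - gp‖ ^ 2 := by
    have := hPoin e hdiffe hie2 hige hief
    rw [havg] at this
    simpa [hgradee] using this
  have hA2 : ∫ x in K, e x ^ 2 ≤ (Cp * h ^ 2) ^ 2 * (C₀ * J) := by
    calc ∫ x in K, e x ^ 2 ≤ Cp ^ 2 * h ^ 2 * (C₀ * h ^ 2 * J) := by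
          refine hA.trans ?_
          have hnn : (0:ℝ) ≤ Cp ^ 2 * h ^ 2 := by positivity
          exact mul_le_mul_of_nonneg_left hcoreS hnn
      _ = (Cp * h ^ 2) ^ 2 * (C₀ * J) := by ring
  have hB2 : ∫ x in K, ‖f x - gp‖ ^ 2 ≤ h ^ 2 * (C₀ * J) := by
    refine hcoreK.trans (le_of_eq ?_)
    ring
  -- take square roots
  have hsA : Real.sqrt (∫ x in K, e x ^ 2) ≤ Cp * h ^ 2 * (Real.sqrt C₀ * Real.sqrt J) := by
    refine (Real.sqrt_le_sqrt hA2).trans (le_of_eq ?_)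
    rw [Real.sqrt_mul (sq_nonneg _), Real.sqrt_sq (by positivity),
      Real.sqrt_mul hC₀pos.le]
  have hsB : Real.sqrt (∫ x in K, ‖f x - gp‖ ^ 2) ≤ h * (Real.sqrt C₀ * Real.sqrt J) := by
    refine (Real.sqrt_le_sqrt hB2).trans (le_of_eq ?_)
    rw [Real.sqrt_mul (sq_nonneg _), Real.sqrt_sq hd.le, Real.sqrt_mul hC₀pos.le]
  have hAnn : 0 ≤ Real.sqrt (∫ x in K, e x ^ 2) := Real.sqrt_nonneg _
  calc h⁻¹ * Real.sqrt (∫ x in K, e x ^ 2) + Real.sqrt (∫ x in K, ‖f x - gp‖ ^ 2)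
      ≤ h⁻¹ * (Cp * h ^ 2 * (Real.sqrt C₀ * Real.sqrt J)) +
          h * (Real.sqrt C₀ * Real.sqrt J) := by
        refine add_le_add (mul_le_mul_of_nonneg_left hsA (by positivity)) hsB
    _ = (Cp + 1) * Real.sqrt C₀ * h * Real.sqrt J := by
        field_simp

end
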